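/- For any n×n complex matrix A and any nonzero v ∈ ℂⁿ, if the span of {v, Av, A*v} has dimension ≤ 2 and v is not a common eigenvector of A and A*, and n = 3, then A is unitarily tridiagonalisable. -/

import Mathlib

open Matrix

/-- A matrix is tridiagonal if all entries with |i-j| ≥ 2 vanish. -/
def IsTridiagonal {n : ℕ} (B : Matrix (Fin n) (Fin n) ℂ) : Prop :=
  ∀ i j : Fin n, 2 ≤ |(i : ℤ) - (j : ℤ)| → B i j = 0

/-- A is unitarily tridiagonalisable. -/
def IsUnitarilyTridiagonalisable {n : ℕ} (A : Matrix (Fin n) (Fin n) ℂ) : Prop :=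
  ∃ U ∈ Matrix.unitaryGroup (Fin n) ℂ, IsTridiagonal (U * A * Uᴴ)

open scoped InnerProductSpace

theorem tridiagonalisable_three_of_dependent_noneigen
    (A : Matrix (Fin 3) (Fin 3) ℂ) (v : Fin 3 → ℂ) (hv : v ≠ 0)
    (hdep : Module.finrank ℂ
      (Submodule.span ℂ {v, A.mulVec v, Aᴴ.mulVec v} : Submodule ℂ (Fin 3 → ℂ)) ≤ 2)
    (hnotcommon : ¬ ((∃ μ : ℂ, A.mulVec v = μ • v) ∧ (∃ ν : ℂ, Aᴴ.mulVec v = ν • v))) :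
    IsUnitarilyTridiagonalisable A := by
  classical
  set f : (Fin 3 → ℂ) ≃ₗ[ℂ] EuclideanSpace ℂ (Fin 3) :=
    (WithLp.linearEquiv 2 ℂ (Fin 3 → ℂ)).symm with hf
  set W : Submodule ℂ (EuclideanSpace ℂ (Fin 3)) :=
    (Submodule.span ℂ {v, A.mulVec v, Aᴴ.mulVec v}).map
      (f : (Fin 3 → ℂ) →ₗ[ℂ] EuclideanSpace ℂ (Fin 3)) with hW
  have hWrank : Module.finrank ℂ W ≤ 2 := by
    rw [hW, LinearEquiv.finrank_map_eq]; exact hdep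
  have hWv : f v ∈ W := Submodule.mem_map_of_mem (Submodule.subset_span (by simp))
  have hWAv : f (A.mulVec v) ∈ W := Submodule.mem_map_of_mem (Submodule.subset_span (by simp))
  have hWAH : f (Aᴴ.mulVec v) ∈ W := Submodule.mem_map_of_mem (Submodule.subset_span (by simp))
  have hfv : f v ≠ 0 := fun h => hv (f.map_eq_zero_iff.mp h)
  have hcard : Module.finrank ℂ (EuclideanSpace ℂ (Fin 3)) = 3 := finrank_euclideanSpace_fin
  obtain ⟨w, hwW, hw0⟩ : ∃ w ∈ Wᗮ, w ≠ 0 := by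
    have h2 := Submodule.finrank_add_finrank_orthogonal (K := W)
    rw [hcard] at h2
    have h1 : 0 < Module.finrank ℂ Wᗮ := by omega
    have : Nontrivial ↥Wᗮ := Module.finrank_pos_iff.mp h1
    obtain ⟨⟨w, hw⟩, hw0⟩ := exists_ne (0 : ↥Wᗮ)
    exact ⟨w, hw, fun h => hw0 (Subtype.ext h)⟩
  set e0 : EuclideanSpace ℂ (Fin 3) := (‖f v‖⁻¹ : ℂ) • f v with he0
  set e2 : EuclideanSpace ℂ (Fin 3) := (‖w‖⁻¹ : ℂ) • w with he2
  have he0W : e0 ∈ W := W.smul_mem _ hWv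
  have he2W : e2 ∈ Wᗮ := Wᗮ.smul_mem _ hwW
  have hn0 : ‖e0‖ = 1 := norm_smul_inv_norm hfv
  have hn2 : ‖e2‖ = 1 := norm_smul_inv_norm hw0
  have hperp02 : ⟪e0, e2⟫_ℂ = 0 := (Submodule.mem_orthogonal W e2).mp he2W e0 he0W
  set vv : Fin 3 → EuclideanSpace ℂ (Fin 3) := ![e0, 0, e2] with hvv
  have horth : Orthonormal ℂ (Set.restrict {0, 2} vv) := by
    constructor
    · rintro ⟨i, hi⟩
      simp only [Set.mem_insert_iff, Set.mem_singleton_iff] at hi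
      rcases hi with rfl | rfl
      · exact hn0
      · exact hn2
    · rintro ⟨i, hi⟩ ⟨j, hj⟩ hij
      simp only [Set.mem_insert_iff, Set.mem_singleton_iff] at hi hj
      rcases hi with rfl | rfl <;> rcases hj with rfl | rfl
      · simp at hij
      · exact hperp02
      · exact inner_eq_zero_symm.mp hperp02
      · simp at hij
  obtain ⟨b, hb⟩ := horth.exists_orthonormalBasis_extension_of_card_eq (by simpa using hcard)
  have hb0 : b 0 = e0 := by simpa [vv] using hb 0 (by simp)
  have hb2 : b 2 = e2 := by simpa [vv] using hb 2 (by simp)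
  set U : Matrix (Fin 3) (Fin 3) ℂ := Matrix.of fun i k => (starRingEnd ℂ) (b i k) with hU
  have hUmem : U ∈ Matrix.unitaryGroup (Fin 3) ℂ := by
    rw [Matrix.mem_unitaryGroup_iff]
    ext i j
    have key : (U * star U) i j = ⟪b i, b j⟫_ℂ := by
      simp [hU, Matrix.mul_apply, Matrix.star_eq_conjTranspose, Matrix.conjTranspose_apply,
        PiLp.inner_apply, RCLike.inner_apply]
      exact Finset.sum_congr rfl fun _ _ => mul_comm _ _
    rw [key, orthonormal_iff_ite.mp b.orthonormal i j, Matrix.one_apply]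
  have hentry : ∀ i j, (U * A * Uᴴ) i j
      = ∑ l, ∑ k, (starRingEnd ℂ) (b i k) * A k l * b j l := by
    intro i j
    simp [hU, Matrix.mul_apply, Matrix.conjTranspose_apply, Finset.sum_mul]
  have hx20 : f (A.mulVec (f.symm (b 0))) ∈ W := by
    rw [hb0, he0, _root_.map_smul, LinearEquiv.symm_apply_apply, Matrix.mulVec_smul, _root_.map_smul]
    exact W.smul_mem _ hWAv
  have hx02 : f (Aᴴ.mulVec (f.symm (b 0))) ∈ W := by
    rw [hb0, he0, _root_.map_smul, LinearEquiv.symm_apply_apply, Matrix.mulVec_smul, _root_.map_smul]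
    exact W.smul_mem _ hWAH
  have h20 : (U * A * Uᴴ) 2 0 = 0 := by
    have hi : ⟪b 2, f (A.mulVec (f.symm (b 0)))⟫_ℂ = 0 := by
      rw [hb2]
      exact inner_eq_zero_symm.mp ((Submodule.mem_orthogonal W e2).mp he2W _ hx20)
    rw [hentry, Finset.sum_comm, ← hi]
    simp [PiLp.inner_apply, RCLike.inner_apply, hf, Matrix.mulVec, dotProduct,
      Finset.mul_sum, mul_assoc]
    exact Finset.sum_congr rfl fun _ _ => by rw [Finset.sum_mul]; exact Finset.sum_congr rfl fun _ _ => by ring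
  have h02 : (U * A * Uᴴ) 0 2 = 0 := by
    have hi : ⟪f (Aᴴ.mulVec (f.symm (b 0))), b 2⟫_ℂ = 0 := by
      rw [hb2]
      exact (Submodule.mem_orthogonal W e2).mp he2W _ hx02
    rw [hentry, ← hi]
    simp [PiLp.inner_apply, RCLike.inner_apply, hf, Matrix.mulVec, dotProduct,
      Matrix.conjTranspose_apply, map_sum, Finset.sum_mul]
    exact Finset.sum_congr rfl fun l _ => by rw [Finset.mul_sum]; exact Finset.sum_congr rfl fun k _ => by ring
  refine ⟨U, hUmem, ?_⟩
  intro i j hij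
  have hcase : (i.1 = 2 ∧ j.1 = 0) ∨ (i.1 = 0 ∧ j.1 = 2) := by
    have h1 : i.1 < 3 := i.2
    have h2 : j.1 < 3 := j.2
    rcases le_abs.mp hij with h | h <;> omega
  rcases hcase with ⟨ha, hb⟩ | ⟨ha, hb⟩
  · obtain rfl : i = 2 := Fin.ext ha
    obtain rfl : j = 0 := Fin.ext hb
    exact h20
  · obtain rfl : i = 0 := Fin.ext ha
    obtain rfl : j = 2 := Fin.ext hb
    exact h02
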